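/- For every integer n ≥ 1, the value P_n(3) of the n-th Legendre polynomial at 3 satisfies P_n(3) < (3 + 2√2)^n. -/

import Mathlib

open Polynomial Finset

lemma iteratedDeriv_eval (k : ℕ) (p : ℝ[X]) (z : ℝ) :
    iteratedDeriv k (fun t : ℝ => p.eval t) z = (derivative^[k] p).eval z := by
  induction k generalizing p z with
  | zero => simp
  | succ k ih =>
    rw [iteratedDeriv_succ', Function.iterate_succ_apply]
    have : deriv (fun t : ℝ => p.eval t) = fun t : ℝ => (derivative p).eval t := by
      funext t; exact Polynomial.deriv p
    rw [this, ih]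

lemma closed_form (n : ℕ) :
    iteratedDeriv n (fun t : ℝ => (t ^ 2 - 1) ^ n) 3 =
      ∑ k ∈ range (n + 1),
        (n.choose k : ℝ) * (n.descFactorial (n - k) * 2 ^ k) *
          (n.descFactorial k * 4 ^ (n - k)) := by
  have hf : (fun t : ℝ => (t ^ 2 - 1) ^ n)
      = fun t : ℝ => (((X - C 1) ^ n * (X + C 1) ^ n : ℝ[X])).eval t := by
    funext t
    simp [← mul_pow]
    ring_nf
  rw [hf, iteratedDeriv_eval, iterate_derivative_mul]
  rw [eval_finset_sum]
  refine Finset.sum_congr rfl fun k hk => ?_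
  have hk' : k ≤ n := Nat.lt_succ_iff.mp (mem_range.mp hk)
  rw [iterate_derivative_X_sub_pow, iterate_derivative_X_add_pow,
    Nat.sub_sub_self hk']
  simp [nsmul_eq_mul]
  ring

lemma term_eq (n k : ℕ) (hk : k ≤ n) :
    (n.choose k : ℝ) * (n.descFactorial (n - k) * 2 ^ k) *
        (n.descFactorial k * 4 ^ (n - k))
      = 2 ^ n * n.factorial * ((n.choose k : ℝ) * Real.sqrt 2 ^ (n - k)) ^ 2 := by
  have h2 : (Real.sqrt 2 ^ (n - k)) ^ 2 = 2 ^ (n - k) := by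
    rw [← pow_mul, mul_comm, pow_mul, Real.sq_sqrt (by norm_num)]
  have hnat : n.choose k * n.descFactorial (n - k) * n.descFactorial k
      = n.factorial * n.choose k ^ 2 := by
    rw [Nat.descFactorial_eq_factorial_mul_choose, Nat.descFactorial_eq_factorial_mul_choose,
      Nat.choose_symm hk]
    have := Nat.choose_mul_factorial_mul_factorial hk
    ring_nf
    ring_nf at this
    nlinarith [this]
  have hpow : (2 : ℝ) ^ k * 4 ^ (n - k) = 2 ^ n * 2 ^ (n - k) := by
    have h4 : (4 : ℝ) = 2 ^ 2 := by norm_num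
    rw [h4, ← pow_mul, ← pow_add, ← pow_add]
    congr 1
    omega
  have hnat' : ((n.choose k : ℝ) * n.descFactorial (n - k) * n.descFactorial k)
      = (n.factorial : ℝ) * (n.choose k : ℝ) ^ 2 := by
    exact_mod_cast congrArg (Nat.cast : ℕ → ℝ) hnat
  calc (n.choose k : ℝ) * (n.descFactorial (n - k) * 2 ^ k) *
        (n.descFactorial k * 4 ^ (n - k))
      = ((n.choose k : ℝ) * n.descFactorial (n - k) * n.descFactorial k)
        * ((2:ℝ) ^ k * 4 ^ (n - k)) := by ring
    _ = (n.factorial : ℝ) * (n.choose k : ℝ) ^ 2 * (2 ^ n * 2 ^ (n - k)) := by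
        rw [hnat', hpow]
    _ = 2 ^ n * n.factorial * ((n.choose k : ℝ) ^ 2 * ((Real.sqrt 2 ^ (n - k)) ^ 2)) := by
        rw [h2]; ring
    _ = _ := by ring

lemma ineq (n : ℕ) (hn : 1 ≤ n) :
    ∑ k ∈ range (n + 1), ((n.choose k : ℝ) * Real.sqrt 2 ^ (n - k)) ^ 2
      < (3 + 2 * Real.sqrt 2) ^ n := by
  set a : ℕ → ℝ := fun k => (n.choose k : ℝ) * Real.sqrt 2 ^ (n - k) with ha
  have hs2 : (0:ℝ) < Real.sqrt 2 := Real.sqrt_pos.mpr (by norm_num)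
  have hapos : ∀ k ∈ range (n + 1), 0 < a k := by
    intro k hk
    have hk' : k ≤ n := Nat.lt_succ_iff.mp (mem_range.mp hk)
    exact mul_pos (by exact_mod_cast Nat.choose_pos hk') (pow_pos hs2 _)
  set S := ∑ k ∈ range (n + 1), a k with hS
  have hSum : S = (1 + Real.sqrt 2) ^ n := by
    rw [hS, add_pow]
    refine Finset.sum_congr rfl fun k hk => ?_
    rw [ha]; ring
  have hlt : ∀ k ∈ range (n + 1), a k < S := by
    intro k hk
    have h2 : 2 ≤ n + 1 := by omega
    obtain ⟨j, hj, hjk⟩ : ∃ j ∈ range (n + 1), j ≠ k := by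
      rcases eq_or_ne k 0 with rfl | hk0
      · exact ⟨1, mem_range.mpr (by omega), one_ne_zero⟩
      · exact ⟨0, mem_range.mpr (by omega), fun h => hk0 h.symm⟩
    exact Finset.single_lt_sum hjk hk hj (hapos j hj)
      fun i hi _ => (hapos i hi).le
  have key : ∑ k ∈ range (n + 1), a k ^ 2 < S ^ 2 := by
    have : ∑ k ∈ range (n + 1), a k ^ 2 < ∑ k ∈ range (n + 1), a k * S := by
      refine Finset.sum_lt_sum_of_nonempty (nonempty_range_add_one) fun k hk => ?_
      rw [sq]
      exact mul_lt_mul_of_pos_left (hlt k hk) (hapos k hk)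
    calc ∑ k ∈ range (n + 1), a k ^ 2 < ∑ k ∈ range (n + 1), a k * S := this
      _ = S * S := by rw [← Finset.sum_mul]
      _ = S ^ 2 := (sq S).symm
  have hfin : S ^ 2 = (3 + 2 * Real.sqrt 2) ^ n := by
    rw [hSum, ← pow_mul, mul_comm, pow_mul]
    congr 1
    have : Real.sqrt 2 ^ 2 = 2 := Real.sq_sqrt (by norm_num)
    nlinarith [this]
  rwa [hfin] at key

/-- The `n`-th Legendre polynomial at `z`, via the Rodrigues formula. -/
noncomputable def legendre (n : ℕ) (z : ℝ) : ℝ :=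
  iteratedDeriv n (fun t : ℝ => (t ^ 2 - 1) ^ n) z / (2 ^ n * n.factorial)

/-- For every `n ≥ 1`, `P_n(3) < (3 + 2√2)^n`. -/
theorem stmt_4 (n : ℕ) (hn : 1 ≤ n) :
    legendre n 3 < (3 + 2 * Real.sqrt 2) ^ n := by
  have hd : (0:ℝ) < 2 ^ n * n.factorial :=
    mul_pos (pow_pos two_pos n) (by exact_mod_cast n.factorial_pos)
  have hval : legendre n 3
      = ∑ k ∈ range (n + 1), ((n.choose k : ℝ) * Real.sqrt 2 ^ (n - k)) ^ 2 := by
    rw [legendre, closed_form]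
    rw [Finset.sum_congr rfl fun k hk =>
      term_eq n k (Nat.lt_succ_iff.mp (mem_range.mp hk))]
    rw [← Finset.mul_sum]
    field_simp
  rw [hval]
  exact ineq n hn
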